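/- The 5-cycle C₅ has a vector 3-colouring witnessing vector chromatic number at most √5 < 3: placing the vertices on the unit circle in pentagram order, adjacent vertices have inner product cos(4π/5) = −1/(√5 − 1), so ⃗χ(C₅) ≤ √5. -/

import Mathlib

open Real

lemma inner_circle (a b : ℝ) :
    (inner ℝ ((WithLp.equiv 2 (Fin 2 → ℝ)).symm ![Real.cos a, Real.sin a])
      ((WithLp.equiv 2 (Fin 2 → ℝ)).symm ![Real.cos b, Real.sin b]) : ℝ) =
      Real.cos (a - b) := by
  simp [EuclideanSpace.inner_eq_star_dotProduct, dotProduct, Fin.sum_univ_two,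
    Real.cos_sub, mul_comm]

lemma cos_four_pi_div_five : Real.cos (4 * Real.pi / 5) = -1 / (Real.sqrt 5 - 1) := by
  have h1 : (4 : ℝ) * Real.pi / 5 = Real.pi - Real.pi / 5 := by ring
  have h5 : Real.sqrt 5 * Real.sqrt 5 = 5 := Real.mul_self_sqrt (by norm_num)
  have h5' : (1:ℝ) < Real.sqrt 5 := by nlinarith [Real.sqrt_nonneg 5]
  have hne : Real.sqrt 5 - 1 ≠ 0 := sub_ne_zero.mpr (ne_of_gt h5')
  rw [h1, Real.cos_pi_sub, Real.cos_pi_div_five]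
  field_simp
  nlinarith

lemma cos_pm (x : ℝ)
    (h : (x - 4 * Real.pi / 5) * (x + 4 * Real.pi / 5) * ((x - 16 * Real.pi / 5) *
      (x + 16 * Real.pi / 5)) = 0) :
    Real.cos x ≤ -1 / (Real.sqrt 5 - 1) := by
  have h16 : Real.cos (16 * Real.pi / 5) = -1 / (Real.sqrt 5 - 1) := by
    have e : (16:ℝ) * Real.pi / 5 = -(4 * Real.pi / 5) + 2 * Real.pi + 2 * Real.pi := by ring
    rw [e, Real.cos_add_two_pi, Real.cos_add_two_pi, Real.cos_neg, cos_four_pi_div_five]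
  rcases mul_eq_zero.mp h with h' | h' <;> rcases mul_eq_zero.mp h' with h'' | h'' <;>
    [rw [sub_eq_zero.mp h'']; rw [eq_neg_of_add_eq_zero_left h'', Real.cos_neg];
     rw [sub_eq_zero.mp h'']; rw [eq_neg_of_add_eq_zero_left h'', Real.cos_neg]] <;>
    simp only [cos_four_pi_div_five, h16, le_refl]

/-- The 5-cycle `C₅` has a vector `√5`-colouring (and `√5 < 3`): placing the vertices
on the unit circle in pentagram order, vertex `j` at angle `4πj/5`, adjacent vertices
have inner product `cos(4π/5) = −1/(√5 − 1)`.  Hence `⃗χ(C₅) ≤ √5`. -/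
theorem c5_vector_coloring :
    Real.sqrt 5 < 3 ∧
    ∃ x : Fin 5 → EuclideanSpace ℝ (Fin 2),
      (∀ j : Fin 5, x j = (WithLp.equiv 2 (Fin 2 → ℝ)).symm
        ![Real.cos (4 * Real.pi * (j : ℕ) / 5), Real.sin (4 * Real.pi * (j : ℕ) / 5)]) ∧
      (∀ v, ‖x v‖ = 1) ∧
      ∀ v w : Fin 5, (SimpleGraph.cycleGraph 5).Adj v w →
        (inner ℝ (x v) (x w) : ℝ) ≤ -1 / (Real.sqrt 5 - 1) := by
  refine ⟨by nlinarith [Real.sq_sqrt (by norm_num : (0:ℝ) ≤ 5), Real.sqrt_nonneg 5], ?_⟩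
  refine ⟨fun j => (WithLp.equiv 2 (Fin 2 → ℝ)).symm
    ![Real.cos (4 * Real.pi * (j : ℕ) / 5), Real.sin (4 * Real.pi * (j : ℕ) / 5)],
    fun j => rfl, ?_, ?_⟩
  · intro v
    rw [EuclideanSpace.norm_eq]
    simp only [WithLp.equiv_symm_apply, WithLp.ofLp_toLp, Fin.sum_univ_two, Matrix.cons_val_zero,
      Matrix.cons_val_one, Matrix.head_cons, Real.norm_eq_abs, sq_abs]
    rw [show Real.cos (4 * Real.pi * (v : ℕ) / 5) ^ 2 + Real.sin (4 * Real.pi * (v : ℕ) / 5) ^ 2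
        = 1 from Real.cos_sq_add_sin_sq _]
    exact Real.sqrt_one
  · intro v w hadj
    rw [inner_circle]
    fin_cases v <;> fin_cases w <;>
      (try exact absurd hadj (by decide)) <;>
      simp only [Fin.isValue, Fin.val_zero, Fin.val_one, Nat.cast_zero, Nat.cast_one,
        Nat.cast_ofNat, Fin.val_two] <;>
      exact cos_pm _ (by ring)
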